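/- arXiv:1904.02376 — 2 statements merged into one kernel-verified Lean document; each statement's English description precedes it below -/
import Mathlib

section
/- If R is a G-graded ring with G a finite group and R is graded nil clean, then the graded Jacobson radical J^g(R) is graded-nil, i.e., every homogeneous element of J^g(R) is nilpotent. -/
/-- A `G`-grading of a ring `R`: a family of additive subgroups `C g` with
`C g * C h ⊆ C (g*h)`, `1 ∈ C e`, and `R = ⊕_g C g` (internal direct sum). -/
structure Grading (G : Type*) [Group G] [DecidableEq G] (R : Type*) [Ring R] where
  C : G → AddSubgroup R
  one_mem : (1 : R) ∈ C 1
  mul_mem : ∀ {g h : G} {a b : R}, a ∈ C g → b ∈ C h → a * b ∈ C (g * h)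
  isInternal : DirectSum.IsInternal C

namespace Grading

variable {G : Type*} [Group G] [DecidableEq G] {R : Type*} [Ring R]

/-- An element is homogeneous if it lies in some component. -/
def Homogeneous (A : Grading G R) (a : R) : Prop := ∃ g, a ∈ A.C g

/-- A homogeneous element is graded nil clean if it is the sum of a homogeneous
idempotent and a homogeneous nilpotent. -/
def IsGradedNilClean (A : Grading G R) (a : R) : Prop :=
  ∃ f b : R, A.Homogeneous f ∧ IsIdempotentElem f ∧ A.Homogeneous b ∧
    IsNilpotent b ∧ a = f + b

/-- A graded ring is graded nil clean if every homogeneous element is. -/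
def GradedNilClean (A : Grading G R) : Prop :=
  ∀ a : R, A.Homogeneous a → A.IsGradedNilClean a

/-- Graded strongly nil clean element: the idempotent and nilpotent commute. -/
def IsGradedStronglyNilClean (A : Grading G R) (a : R) : Prop :=
  ∃ f b : R, A.Homogeneous f ∧ IsIdempotentElem f ∧ A.Homogeneous b ∧
    IsNilpotent b ∧ f * b = b * f ∧ a = f + b

def GradedStronglyNilClean (A : Grading G R) : Prop :=
  ∀ a : R, A.Homogeneous a → A.IsGradedStronglyNilClean a

end Grading

namespace Grading
variable {G : Type*} [Group G] [DecidableEq G] {R : Type*} [Ring R]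

noncomputable def decomp (A : Grading G R) : R ≃+ DirectSum G (fun g => A.C g) :=
  (AddEquiv.ofBijective (DirectSum.coeAddMonoidHom A.C) A.isInternal).symm

noncomputable def proj (A : Grading G R) (d : G) (x : R) : R := (A.decomp x d : R)

lemma proj_mem (A : Grading G R) (d : G) (x : R) : A.proj d x ∈ A.C d := (A.decomp x d).2

lemma proj_add (A : Grading G R) (d : G) (x y : R) :
    A.proj d (x + y) = A.proj d x + A.proj d y := by
  simp [proj, map_add]

lemma decomp_of_mem (A : Grading G R) {d : G} {x : R} (hx : x ∈ A.C d) :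
    A.decomp x = DirectSum.of (fun g => A.C g) d ⟨x, hx⟩ := by
  rw [decomp, AddEquiv.symm_apply_eq]
  simp [AddEquiv.ofBijective]
  exact (DirectSum.coeAddMonoidHom_of A.C d ⟨x, hx⟩).symm

lemma proj_of_mem (A : Grading G R) {d : G} {x : R} (hx : x ∈ A.C d) : A.proj d x = x := by
  rw [proj, A.decomp_of_mem hx]
  simp

lemma proj_of_mem_ne (A : Grading G R) {d d' : G} {x : R} (hx : x ∈ A.C d) (hne : d ≠ d') :
    A.proj d' x = 0 := by
  rw [proj, A.decomp_of_mem hx, DirectSum.of_eq_of_ne _ _ _ hne.symm]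
  rfl

noncomputable def projHom (A : Grading G R) (d : G) : R →+ R :=
  AddMonoidHom.mk' (A.proj d) (A.proj_add d)

lemma projHom_apply (A : Grading G R) (d : G) (x : R) : A.projHom d x = A.proj d x := rfl

lemma sum_proj (A : Grading G R) (x : R) :
    ∃ s : Finset G, x = (∑ d ∈ s, A.proj d x) ∧ ∀ d ∉ s, A.proj d x = 0 := by
  classical
  refine ⟨(A.decomp x).support, ?_, fun d hd => ?_⟩
  case refine_2 =>
    have : A.decomp x d = 0 := DFinsupp.notMem_support_iff.mp hd
    simp [proj, this]
  have h1 : x = (AddEquiv.ofBijective (DirectSum.coeAddMonoidHom A.C) A.isInternal)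
      (A.decomp x) := (AddEquiv.apply_symm_apply _ x).symm
  have h2 : (AddEquiv.ofBijective (DirectSum.coeAddMonoidHom A.C) A.isInternal) (A.decomp x)
      = ∑ d ∈ (A.decomp x).support, A.proj d x := by
    conv_lhs => rw [← DirectSum.sum_support_of (A.decomp x)]
    rw [map_sum]
    simp [proj, AddEquiv.ofBijective]
    exact Finset.sum_congr rfl fun i _ => DirectSum.coeAddMonoidHom_of _ _ _
  exact h1.trans h2

end Grading

namespace Grading
variable {G : Type*} [Group G] [DecidableEq G] {R : Type*} [Ring R]

/-- Projection commutes with left multiplication by a homogeneous element. -/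
lemma proj_mul_left (A : Grading G R) {h : G} {r : R} (hr : r ∈ A.C h) (x : R) (d : G) :
    A.proj (h * d) (r * x) = r * A.proj d x := by
  classical
  obtain ⟨s, hs, hz⟩ := A.sum_proj x
  have hx : r * x = ∑ i ∈ s, r * A.proj i x := by
    conv_lhs => rw [hs]
    rw [Finset.mul_sum]
  rw [show A.proj (h*d) (r*x) = A.projHom (h*d) (r*x) from rfl, hx, map_sum]
  have hterm : ∀ i ∈ s, A.projHom (h*d) (r * A.proj i x)
      = if i = d then r * A.proj d x else 0 := by
    intro i _
    by_cases hid : i = d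
    · subst hid
      rw [projHom_apply, A.proj_of_mem (A.mul_mem hr (A.proj_mem i x)), if_pos rfl]
    · rw [projHom_apply, A.proj_of_mem_ne (A.mul_mem hr (A.proj_mem i x))
        (fun hc => hid (mul_left_cancel hc)), if_neg hid]
  rw [Finset.sum_congr rfl hterm, Finset.sum_ite_eq' s d (fun _ => r * A.proj d x)]
  by_cases hd : d ∈ s
  · rw [if_pos hd]
  · rw [if_neg hd, hz d hd, mul_zero]
end Grading


/-- A homogeneous right ideal of a graded ring. -/
structure HomRightIdeal {G : Type*} [Group G] [DecidableEq G] {R : Type*} [Ring R]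
    (A : Grading G R) where
  carrier : AddSubgroup R
  mul_mem_right : ∀ a ∈ carrier, ∀ r : R, a * r ∈ carrier
  homogeneous : ∀ a ∈ carrier, a ∈ ⨆ g : G, (A.C g ⊓ carrier)

namespace HomRightIdeal

variable {G : Type*} [Group G] [DecidableEq G] {R : Type*} [Ring R] {A : Grading G R}

/-- A maximal (proper) homogeneous right ideal. -/
def IsMaximal (I : HomRightIdeal A) : Prop :=
  I.carrier ≠ ⊤ ∧ ∀ J : HomRightIdeal A, J.carrier ≠ ⊤ → I.carrier ≤ J.carrier →
    J.carrier = I.carrier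

end HomRightIdeal

namespace HomRightIdeal

variable {G : Type*} [Group G] [DecidableEq G] {R : Type*} [Ring R] {A : Grading G R}

/-- Components of members of a homogeneous right ideal are members. -/
lemma proj_mem_of_mem (I : HomRightIdeal A) {y : R} (hy : y ∈ I.carrier) (d : G) :
    A.proj d y ∈ I.carrier := by
  have key : ∀ d, A.proj d y ∈ I.carrier := by
    refine AddSubgroup.iSup_induction (C := fun z => ∀ d, A.proj d z ∈ I.carrier)
      (fun g => A.C g ⊓ I.carrier) (I.homogeneous y hy) ?_ ?_ ?_
    · rintro g z ⟨hzg, hzI⟩ d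
      by_cases hgd : g = d
      · subst hgd; rwa [A.proj_of_mem hzg]
      · rw [A.proj_of_mem_ne hzg hgd]; exact zero_mem _
    · intro d; rw [show A.proj d 0 = A.projHom d 0 from rfl, map_zero]; exact zero_mem _
    · intro x y hx hy d
      rw [show A.proj d (x + y) = A.proj d x + A.proj d y from A.proj_add d x y]
      exact add_mem (hx d) (hy d)
  exact key d

/-- If every component of `x` lies in an additive subgroup `B`, then `x` lies in
the homogeneous part supremum. -/
lemma mem_iSup_of_proj {B : AddSubgroup R} {x : R} (hx : ∀ d, A.proj d x ∈ B) :
    x ∈ ⨆ g : G, (A.C g ⊓ B) := by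
  obtain ⟨s, hs, -⟩ := A.sum_proj x
  rw [hs]
  refine AddSubgroup.sum_mem _ fun d _ => ?_
  exact AddSubgroup.mem_iSup_of_mem d ⟨A.proj_mem d x, hx d⟩

lemma eq_top_iff_one (I : HomRightIdeal A) : I.carrier = ⊤ ↔ (1 : R) ∈ I.carrier := by
  constructor
  · intro h; rw [h]; trivial
  · intro h
    rw [AddSubgroup.eq_top_iff']
    intro x
    simpa using I.mul_mem_right 1 h x

end HomRightIdeal


/-- The graded Jacobson radical: the intersection of all maximal homogeneous
right ideals. -/
def Grading.gradedJacobson {G : Type*} [Group G] [DecidableEq G] {R : Type*} [Ring R]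
    (A : Grading G R) : Set R :=
  { a | ∀ I : HomRightIdeal A, I.IsMaximal → a ∈ I.carrier }

namespace Grading

variable {G : Type*} [Group G] [DecidableEq G] {R : Type*} [Ring R] {A : Grading G R}

lemma jac_mul_right {j : R} (hj : j ∈ A.gradedJacobson) (r : R) :
    j * r ∈ A.gradedJacobson := fun I hI => I.mul_mem_right j (hj I hI) r

lemma jac_add {j k : R} (hj : j ∈ A.gradedJacobson) (hk : k ∈ A.gradedJacobson) :
    j + k ∈ A.gradedJacobson := fun I hI => add_mem (hj I hI) (hk I hI)

lemma jac_neg {j : R} (hj : j ∈ A.gradedJacobson) : -j ∈ A.gradedJacobson :=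
  fun I hI => neg_mem (hj I hI)

/-- Left multiplication by a homogeneous element preserves the graded Jacobson radical. -/
lemma jac_mul_left {h : G} {r : R} (hr : r ∈ A.C h) {j : R} (hj : j ∈ A.gradedJacobson) :
    r * j ∈ A.gradedJacobson := by
  intro I hI
  by_cases hrI : r ∈ I.carrier
  · exact I.mul_mem_right r hrI j
  -- the "annihilator" ideal K = {x | r * x ∈ I}
  set K : HomRightIdeal A :=
    { carrier := I.carrier.comap (AddMonoidHom.mulLeft r)
      mul_mem_right := by
        intro a ha s
        have : r * (a * s) = (r * a) * s := (mul_assoc r a s).symm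
        simp only [AddSubgroup.mem_comap, AddMonoidHom.coe_mulLeft] at ha ⊢
        rw [this]
        exact I.mul_mem_right _ ha s
      homogeneous := by
        intro a ha
        simp only [AddSubgroup.mem_comap, AddMonoidHom.coe_mulLeft] at ha
        refine HomRightIdeal.mem_iSup_of_proj fun d => ?_
        simp only [AddSubgroup.mem_comap, AddMonoidHom.coe_mulLeft]
        rw [← A.proj_mul_left hr a d]
        exact I.proj_mem_of_mem ha (h * d) } with hK
  -- K is a maximal homogeneous right ideal
  have hKmax : K.IsMaximal := by
    constructor
    · intro htop
      apply hrI
      have h1 : (1 : R) ∈ K.carrier := by rw [htop]; trivial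
      simpa [hK] using h1
    · intro L hL hKL
      -- consider M = r·L + I
      set M : HomRightIdeal A :=
        { carrier := L.carrier.map (AddMonoidHom.mulLeft r) ⊔ I.carrier
          mul_mem_right := by
            intro a ha s
            rw [AddSubgroup.mem_sup] at ha ⊢
            obtain ⟨y, hy, z, hz, rfl⟩ := ha
            obtain ⟨l, hl, rfl⟩ := hy
            refine ⟨r * (l * s), ⟨l * s, L.mul_mem_right l hl s, by
              simp [mul_assoc]⟩, z * s, I.mul_mem_right z hz s, by
              simp [AddMonoidHom.coe_mulLeft, add_mul, mul_assoc]⟩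
          homogeneous := by
            intro a ha
            refine HomRightIdeal.mem_iSup_of_proj fun d => ?_
            rw [AddSubgroup.mem_sup] at ha
            obtain ⟨y, hy, z, hz, rfl⟩ := ha
            obtain ⟨l, hl, rfl⟩ := hy
            rw [show A.proj d ((AddMonoidHom.mulLeft r) l + z)
              = A.proj d (r * l) + A.proj d z from A.proj_add d _ _]
            refine add_mem ?_ (AddSubgroup.mem_sup_right (I.proj_mem_of_mem hz d))
            have : A.proj d (r * l) = r * A.proj (h⁻¹ * d) l := by
              rw [← A.proj_mul_left hr l (h⁻¹ * d), mul_inv_cancel_left]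
            rw [this]
            exact AddSubgroup.mem_sup_left ⟨A.proj (h⁻¹*d) l,
              L.proj_mem_of_mem hl (h⁻¹*d), rfl⟩ } with hM
      have hIM : I.carrier ≤ M.carrier := le_sup_right
      by_cases hMtop : M.carrier = ⊤
      · -- then L = ⊤, contradiction
        exfalso
        apply hL
        rw [AddSubgroup.eq_top_iff']
        intro x
        have hx : r * x ∈ M.carrier := by rw [hMtop]; trivial
        rw [AddSubgroup.mem_sup] at hx
        obtain ⟨y, hy, z, hz, hyz⟩ := hx
        obtain ⟨l, hl, rfl⟩ := hy
        have hxl : x - l ∈ K.carrier := by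
          simp only [hK, AddSubgroup.mem_comap, AddMonoidHom.coe_mulLeft]
          have : r * (x - l) = z := by
            have : (AddMonoidHom.mulLeft r) l = r * l := rfl
            rw [this] at hyz
            rw [mul_sub]
            rw [← hyz]
            abel
          rw [this]; exact hz
        have : (x - l) + l ∈ L.carrier := add_mem (hKL hxl) hl
        simpa using this
      · have hMI := hI.2 M hMtop hIM
        -- then L ≤ K
        apply le_antisymm _ hKL
        intro l hl
        simp only [hK, AddSubgroup.mem_comap, AddMonoidHom.coe_mulLeft]
        have : r * l ∈ M.carrier := AddSubgroup.mem_sup_left ⟨l, hl, rfl⟩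
        rw [hMI] at this
        exact this
  have := hj K hKmax
  simpa [hK, AddSubgroup.mem_comap] using this

end Grading

namespace Grading

variable {G : Type*} [Group G] [DecidableEq G] {R : Type*} [Ring R] {A : Grading G R}

/-- Every proper homogeneous right ideal is contained in a maximal one. -/
lemma exists_maximal_of_proper (I0 : HomRightIdeal A) (hI0 : I0.carrier ≠ ⊤) :
    ∃ M : HomRightIdeal A, M.IsMaximal ∧ I0.carrier ≤ M.carrier := by
  classical
  set S : Set (AddSubgroup R) :=
    {c | (∀ a ∈ c, ∀ r : R, a * r ∈ c) ∧ (∀ a ∈ c, a ∈ ⨆ g : G, (A.C g ⊓ c)) ∧ c ≠ ⊤} with hS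
  have hone : ∀ c ∈ S, (1 : R) ∉ c := by
    rintro c ⟨hmul, -, hct⟩ h1
    apply hct
    rw [AddSubgroup.eq_top_iff']
    intro x
    simpa using hmul 1 h1 x
  have hI0S : I0.carrier ∈ S := ⟨I0.mul_mem_right, I0.homogeneous, hI0⟩
  obtain ⟨m, hI0m, hmS', hmax'⟩ : ∃ m, I0.carrier ≤ m ∧ Maximal (· ∈ S) m := by
    refine zorn_le_nonempty₀ S ?_ I0.carrier hI0S
    intro c hcS hchain y hyc
    have hne : c.Nonempty := ⟨y, hyc⟩
    have hdir : Directed (· ≤ ·) (fun x : c => (x : AddSubgroup R)) :=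
      hchain.directedOn.directed_val
    have hmem : ∀ {x : R}, x ∈ (⨆ (J : c), (J : AddSubgroup R)) ↔ ∃ J : c, x ∈ (J : AddSubgroup R) := by
      intro x
      haveI : Nonempty c := hne.to_subtype
      exact AddSubgroup.mem_iSup_of_directed hdir
    refine ⟨⨆ (J : c), (J : AddSubgroup R), ⟨?_, ?_, ?_⟩, fun z hz => le_iSup (fun J : c => (J : AddSubgroup R)) ⟨z, hz⟩⟩
    · intro a ha r
      obtain ⟨J, hJ⟩ := hmem.mp ha
      exact hmem.mpr ⟨J, (hcS J.2).1 a hJ r⟩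
    · intro a ha
      obtain ⟨J, hJ⟩ := hmem.mp ha
      have := (hcS J.2).2.1 a hJ
      refine SetLike.le_def.mp ?_ this
      exact iSup_mono fun g => inf_le_inf_left _ (le_iSup (fun J : c => (J : AddSubgroup R)) J)
    · intro htop
      have h1 : (1 : R) ∈ (⨆ (J : c), (J : AddSubgroup R)) := by rw [htop]; trivial
      obtain ⟨J, hJ⟩ := hmem.mp h1
      exact hone J (hcS J.2) hJ
  set M : HomRightIdeal A := ⟨m, hmS'.1, hmS'.2.1⟩ with hMdef
  refine ⟨M, ⟨hmS'.2.2, ?_⟩, hI0m⟩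
  intro J hJ hMJ
  exact le_antisymm (hmax' ⟨J.mul_mem_right, J.homogeneous, hJ⟩ hMJ) hMJ

/-- An idempotent in the graded Jacobson radical whose component lies in degree 1 is 0. -/
lemma idem_jac_eq_zero {f : R} (hf1 : f ∈ A.C 1) (hfi : IsIdempotentElem f)
    (hfJ : f ∈ A.gradedJacobson) : f = 0 := by
  by_contra hf0
  -- the ideal (1 - f)R
  set I0 : HomRightIdeal A :=
    { carrier := (AddMonoidHom.mulLeft (1 - f)).range
      mul_mem_right := by
        rintro a ⟨x, rfl⟩ s
        exact ⟨x * s, by simp [AddMonoidHom.coe_mulLeft, mul_assoc]⟩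
      homogeneous := by
        rintro a ⟨x, rfl⟩
        refine HomRightIdeal.mem_iSup_of_proj fun d => ?_
        have h1f : (1 - f) ∈ A.C 1 := sub_mem A.one_mem hf1
        have : A.proj d ((1 - f) * x) = (1 - f) * A.proj d x := by
          have := A.proj_mul_left h1f x d
          rwa [one_mul] at this
        rw [AddMonoidHom.coe_mulLeft, this]
        exact ⟨A.proj d x, rfl⟩ } with hI0
  have hI0proper : I0.carrier ≠ ⊤ := by
    intro htop
    have h1 : (1 : R) ∈ I0.carrier := by rw [htop]; trivial
    obtain ⟨x, hx⟩ := h1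
    apply hf0
    have hx' : (1 - f) * x = 1 := hx
    calc f = f * ((1 - f) * x) := by rw [hx', mul_one]
    _ = (f - f * f) * x := by rw [← mul_assoc, mul_sub, mul_one]
    _ = 0 := by rw [hfi, sub_self, zero_mul]
  obtain ⟨M, hMmax, hI0M⟩ := exists_maximal_of_proper I0 hI0proper
  have hfM : f ∈ M.carrier := hfJ M hMmax
  have h1fM : (1 : R) - f ∈ M.carrier := hI0M ⟨1, by simp [AddMonoidHom.coe_mulLeft]⟩
  have h1M : (1 : R) ∈ M.carrier := by
    have := add_mem h1fM hfM
    simpa using this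
  exact hMmax.1 ((HomRightIdeal.eq_top_iff_one M).mpr h1M)
end Grading


/-- If `G` is finite and the `G`-graded ring `R` is graded nil clean, then the
graded Jacobson radical `J^g(R)` is graded-nil. -/
theorem stmt5 {G : Type*} [Group G] [DecidableEq G] [Finite G] {R : Type*} [Ring R]
    (A : Grading G R) (h : A.GradedNilClean) :
    ∀ a ∈ A.gradedJacobson, A.Homogeneous a → IsNilpotent a := by

  rintro a haJ ⟨g, hag⟩
  obtain ⟨f, b, ⟨g1, hfg1⟩, hfi, ⟨g2, hbg2⟩, hbn, hab⟩ := h a ⟨g, hag⟩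
  by_cases hf0 : f = 0
  · rw [hab, hf0, zero_add]; exact hbn
  -- f ≠ 0 forces f to be of degree 1
  have hg1 : g1 = 1 := by
    have hsq : f ∈ A.C (g1 * g1) := by
      have := A.mul_mem hfg1 hfg1
      rwa [hfi.eq] at this
    by_contra hne
    apply hf0
    have h1 : A.proj g1 f = f := A.proj_of_mem hfg1
    have h2 : A.proj g1 f = 0 := by
      refine A.proj_of_mem_ne hsq ?_
      intro hc
      exact hne (mul_left_cancel (a := g1) (by rw [hc, mul_one]))
    rw [← h1, h2]
  have hf1 : f ∈ A.C 1 := hg1 ▸ hfg1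
  by_cases hg : g = 1
  · -- main case: a has degree 1
    subst hg
    have hb' : b = a - f := by rw [hab]; abel
    have hfnC : ∀ m : ℕ, (-f) ^ m ∈ A.C 1 := by
      intro m
      induction m with
      | zero => simpa using A.one_mem
      | succ m ihm =>
        rw [pow_succ]
        have := A.mul_mem ihm (neg_mem hf1)
        rwa [one_mul] at this
    have key : ∀ n : ℕ, ∃ j ∈ A.gradedJacobson, (a - f) ^ n = (-f) ^ n + j := by
      intro n
      induction n with
      | zero => exact ⟨0, fun I _ => zero_mem _, by simp⟩
      | succ n ih =>
        obtain ⟨j, hjJ, hj⟩ := ih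
        refine ⟨(-f) ^ n * a + (j * a - j * f), ?_, ?_⟩
        · refine Grading.jac_add (Grading.jac_mul_left (hfnC n) haJ) ?_
          rw [sub_eq_add_neg]
          exact Grading.jac_add (Grading.jac_mul_right hjJ a)
            (Grading.jac_neg (Grading.jac_mul_right hjJ f))
        · rw [pow_succ, hj, pow_succ]
          noncomm_ring
    obtain ⟨n, hbn'⟩ := hbn
    rcases Nat.eq_zero_or_pos n with hn0 | hnpos
    · subst hn0
      have h10 : (1 : R) = 0 := by simpa using hbn'
      exact ⟨1, by rw [pow_one, ← mul_one a, h10, mul_zero]⟩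
    · exfalso
      obtain ⟨j, hjJ, hj⟩ := key n
      rw [← hb', hbn'] at hj
      have hfnJ : (-f) ^ n ∈ A.gradedJacobson := by
        have h0 : (-f) ^ n + j = 0 := hj.symm
        rw [add_eq_zero_iff_eq_neg] at h0
        rw [h0]
        exact Grading.jac_neg hjJ
      have hff : f = (-f) ^ n * (-f) ^ n := by
        rw [← pow_add]
        have hsq : (-f) * (-f) = f := by rw [neg_mul_neg, hfi]
        have h2n : (-f) ^ (n + n) = ((-f) * (-f)) ^ n := by
          rw [← sq, ← pow_mul, two_mul]
        obtain ⟨m, hm⟩ := Nat.exists_eq_succ_of_ne_zero (Nat.pos_iff_ne_zero.mp hnpos)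
        rw [h2n, hsq, hm, hfi.pow_succ_eq]
      have hfJ : f ∈ A.gradedJacobson := by
        rw [hff]
        exact Grading.jac_mul_right hfnJ _
      exact hf0 (Grading.idem_jac_eq_zero hf1 hfi hfJ)
  · -- degree of a is not 1: projection to degree 1 kills a
    have hpa : A.proj 1 a = 0 := A.proj_of_mem_ne hag hg
    have hsum : A.proj 1 a = f + A.proj 1 b := by
      rw [hab, A.proj_add, A.proj_of_mem hf1]
    by_cases hg2 : g2 = 1
    · have hb1 : b ∈ A.C 1 := hg2 ▸ hbg2
      rw [A.proj_of_mem hb1, hpa] at hsum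
      have ha0 : a = 0 := by rw [hab, ← hsum]
      exact ⟨1, by rw [pow_one, ha0]⟩
    · exfalso
      rw [A.proj_of_mem_ne hbg2 hg2, hpa, add_zero] at hsum
      exact hf0 hsum.symm
end

section
/- Let R be a G-graded ring and n a natural number. Then R is graded nil clean if and only if for every σ ∈ G^n, the upper triangular matrix ring T_n(R)(σ), with the grading whose λ-component has (i,j)-entry in R_{g_i λ g_j^{-1}}, is graded nil clean. -/
/-- The `λ`-component of the graded upper triangular matrix ring `T_n(R)(σ)`:
upper triangular matrices whose `(i,j)` entry lies in `R_{σ_i λ σ_j⁻¹}`. -/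
def triC {G : Type*} [Group G] [DecidableEq G] {R : Type*} [Ring R] {n : ℕ}
    (A : Grading G R) (σ : Fin n → G) (lam : G) :
    AddSubgroup (Matrix (Fin n) (Fin n) R) where
  carrier := {M | (∀ i j : Fin n, j < i → M i j = 0) ∧
    ∀ i j : Fin n, M i j ∈ A.C (σ i * lam * (σ j)⁻¹)}
  add_mem' := by
    rintro a b ⟨ha1, ha2⟩ ⟨hb1, hb2⟩
    refine ⟨fun i j hij => ?_, fun i j => ?_⟩
    · simp [Matrix.add_apply, ha1 i j hij, hb1 i j hij]
    · exact add_mem (ha2 i j) (hb2 i j)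
  zero_mem' := ⟨fun i j _ => rfl, fun i j => zero_mem _⟩
  neg_mem' := by
    rintro a ⟨h1, h2⟩
    exact ⟨fun i j hij => by simp [Matrix.neg_apply, h1 i j hij],
      fun i j => neg_mem (h2 i j)⟩


section Helpers

variable {G : Type*} [Group G] [DecidableEq G] {R : Type*} [Ring R]

lemma idem_nilpotent_eq_zero {f : R} (hi : IsIdempotentElem f) (hn : IsNilpotent f) :
    f = 0 := by
  obtain ⟨m, hm⟩ := hn
  cases m with
  | zero => simpa using congrArg (· * f) hm
  | succ k => rw [← hi.pow_succ_eq k, hm]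

namespace Grading

lemma eq_zero_of_mem_ne (A : Grading G R) {g h : G} (hgh : g ≠ h) {x : R}
    (hx : x ∈ A.C g) (hx' : x ∈ A.C h) : x = 0 := by
  have hinj := Function.Bijective.injective A.isInternal
  have heq : DirectSum.of (fun i => (A.C i)) g ⟨x, hx⟩ =
      DirectSum.of (fun i => (A.C i)) h ⟨x, hx'⟩ := by
    apply hinj; simp [DirectSum.coeAddMonoidHom_of]
  have h2 := congrArg (fun u => ((u g : A.C g) : R)) heq
  simp only [DirectSum.of_eq_same, DirectSum.of_eq_of_ne _ _ _ hgh] at h2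
  simpa using h2

lemma eq_zero_of_sum3 (A : Grading G R) {g h k : G} (hgh : g ≠ h) (hgk : g ≠ k)
    (_hhk : h ≠ k) {x y z : R} (hx : x ∈ A.C g) (hy : y ∈ A.C h) (hz : z ∈ A.C k)
    (hsum : x + y + z = 0) : x = 0 := by
  have hinj := Function.Bijective.injective A.isInternal
  have h0 : (DirectSum.of (fun i => (A.C i)) g ⟨x, hx⟩ +
      DirectSum.of (fun i => (A.C i)) h ⟨y, hy⟩ +
      DirectSum.of (fun i => (A.C i)) k ⟨z, hz⟩) = 0 := by
    apply hinj
    simp [map_add, DirectSum.coeAddMonoidHom_of, hsum]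
  have h2 := congrArg (fun u => ((u g : A.C g) : R)) h0
  simp only [DirectSum.add_apply, DirectSum.of_eq_same,
    DirectSum.of_eq_of_ne _ _ _ hgh,
    DirectSum.of_eq_of_ne _ _ _ hgk] at h2
  simpa using h2

/-- Refined graded nil clean decomposition: the idempotent can be chosen in `C 1`
and the nilpotent in `C g`. -/
lemma refine_decomp (A : Grading G R) {g : G} {a : R} (ha : a ∈ A.C g)
    (h : A.IsGradedNilClean a) :
    ∃ f b : R, f ∈ A.C 1 ∧ IsIdempotentElem f ∧ b ∈ A.C g ∧ IsNilpotent b ∧ a = f + b := by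
  obtain ⟨f, b, ⟨gf, hf⟩, hfi, ⟨gb, hb⟩, hbn, heq⟩ := h
  by_cases hf0 : f = 0
  · refine ⟨0, a, zero_mem _, by simp [IsIdempotentElem], ha, ?_, by simp⟩
    subst hf0; rw [heq, zero_add]; exact hbn
  have hgf1 : gf = 1 := by
    by_contra hne
    have hff : f * f ∈ A.C (gf * gf) := A.mul_mem hf hf
    rw [hfi.eq] at hff
    refine hf0 (A.eq_zero_of_mem_ne (g := gf) (h := gf * gf) ?_ hf hff)
    intro hh
    exact hne (mul_left_cancel (a := gf) (show gf * 1 = gf * gf by rw [mul_one, ← hh])).symm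
  have hf1 : f ∈ A.C 1 := hgf1 ▸ hf
  by_cases hg1 : g = 1
  · subst hg1
    refine ⟨f, a - f, hf1, hfi, sub_mem ha hf1, ?_, by abel⟩
    have hab : a - f = b := by rw [heq]; abel
    rw [hab]; exact hbn
  by_cases hb0 : b = 0
  · subst hb0
    have haf : a = f := by simpa using heq
    have ha0 : a = 0 := A.eq_zero_of_mem_ne hg1 ha (haf ▸ hf1)
    exact absurd (haf ▸ ha0) hf0
  by_cases hbg : gb = g
  · exact ⟨f, b, hf1, hfi, hbg ▸ hb, hbn, heq⟩
  by_cases hb1 : gb = 1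
  · have ha1 : a ∈ A.C 1 := heq ▸ add_mem hf1 (hb1 ▸ hb)
    have ha0 : a = 0 := A.eq_zero_of_mem_ne hg1 ha ha1
    have hfb : f + b = 0 := by rw [← heq, ha0]
    have hfn : f = -b := eq_neg_of_add_eq_zero_left hfb
    exact absurd (idem_nilpotent_eq_zero hfi (hfn ▸ hbn.neg)) hf0
  · have hsum : f + b + (-a) = 0 := by rw [heq]; abel
    have hfz := A.eq_zero_of_sum3 (g := (1 : G)) (h := gb) (k := g)
      (Ne.symm hb1) (Ne.symm hg1) hbg hf1 hb (neg_mem ha) hsum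
    exact absurd hfz hf0

end Grading

section MatrixHelpers

variable {n : ℕ}

lemma ut_mul {M N : Matrix (Fin n) (Fin n) R}
    (hM : ∀ i j : Fin n, j < i → M i j = 0) (hN : ∀ i j : Fin n, j < i → N i j = 0) :
    ∀ i j : Fin n, j < i → (M * N) i j = 0 := by
  intro i j hij
  rw [Matrix.mul_apply]
  apply Finset.sum_eq_zero
  intro k _
  rcases lt_or_ge j k with h | h
  · rw [hN k j h, mul_zero]
  · rw [hM i k (lt_of_le_of_lt h hij), zero_mul]

lemma ut_pow {M : Matrix (Fin n) (Fin n) R}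
    (hM : ∀ i j : Fin n, j < i → M i j = 0) :
    ∀ m, ∀ i j : Fin n, j < i → (M ^ m) i j = 0
  | 0 => by
    intro i j hij
    rw [pow_zero]
    exact Matrix.one_apply_ne (ne_of_gt hij)
  | (m + 1) => by
    rw [pow_succ]
    exact ut_mul (ut_pow hM m) hM

lemma ut_diag_pow {M : Matrix (Fin n) (Fin n) R}
    (hM : ∀ i j : Fin n, j < i → M i j = 0) (i : Fin n) :
    ∀ m, (M ^ m) i i = (M i i) ^ m
  | 0 => by simp
  | (m + 1) => by
    rw [pow_succ, pow_succ, Matrix.mul_apply, ← ut_diag_pow hM i m]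
    apply Finset.sum_eq_single i
    · intro k _ hk
      rcases hk.lt_or_gt with h | h
      · rw [ut_pow hM m i k h, zero_mul]
      · rw [hM k i h, mul_zero]
    · intro h; exact absurd (Finset.mem_univ _) h

lemma ut_nilpotent {M : Matrix (Fin n) (Fin n) R}
    (hM : ∀ i j : Fin n, j < i → M i j = 0)
    (hd : ∀ i : Fin n, IsNilpotent (M i i)) : IsNilpotent M := by
  choose k hk using hd
  set K := ∑ i, k i with hKdef
  have hKd : ∀ i : Fin n, (M i i) ^ K = 0 := by
    intro i
    have hle : k i ≤ K :=
      Finset.single_le_sum (f := k) (fun _ _ => Nat.zero_le _) (Finset.mem_univ i)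
    rw [← Nat.sub_add_cancel hle, pow_add, hk i, mul_zero]
  have claim : ∀ t, ∀ i j : Fin n, (j : ℕ) < (i : ℕ) + t → (M ^ (t * K)) i j = 0 := by
    intro t
    induction t with
    | zero =>
      intro i j hij
      rw [Nat.zero_mul, pow_zero]
      refine Matrix.one_apply_ne ?_
      rintro rfl; omega
    | succ t ih =>
      intro i j hij
      rw [Nat.succ_mul, pow_add, Matrix.mul_apply]
      apply Finset.sum_eq_zero
      intro x _
      rcases lt_or_ge (x : ℕ) ((i : ℕ) + t) with h | h
      · rw [ih i x h, zero_mul]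
      · rcases lt_or_eq_of_le (show (j : ℕ) ≤ (x : ℕ) by omega) with h2 | h2
        · rw [ut_pow hM K x j (by exact h2), mul_zero]
        · have hxj : x = j := Fin.ext h2.symm
          subst hxj
          rw [ut_diag_pow hM x K, hKd x, mul_zero]
  refine ⟨n * K, ?_⟩
  ext i j
  rw [Matrix.zero_apply]
  exact claim n i j (by omega)

lemma mem_triC_iff (A : Grading G R) (σ : Fin n → G) (lam : G)
    (M : Matrix (Fin n) (Fin n) R) :
    M ∈ triC A σ lam ↔ ((∀ i j : Fin n, j < i → M i j = 0) ∧
      ∀ i j : Fin n, M i j ∈ A.C (σ i * lam * (σ j)⁻¹)) := Iff.rfl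

end MatrixHelpers

end Helpers

/-- `R` is graded nil clean iff for every `σ ∈ G^n` the graded upper triangular
matrix ring `T_n(R)(σ)` is graded nil clean. -/
theorem stmt13 {G : Type*} [Group G] [DecidableEq G] {R : Type*} [Ring R]
    (A : Grading G R) (n : ℕ) (hn : 0 < n) :
    A.GradedNilClean ↔
      ∀ σ : Fin n → G, ∀ M : Matrix (Fin n) (Fin n) R,
        (∃ lam, M ∈ triC A σ lam) →
          ∃ E B : Matrix (Fin n) (Fin n) R, (∃ lam, E ∈ triC A σ lam) ∧
            IsIdempotentElem E ∧ (∃ lam, B ∈ triC A σ lam) ∧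
            IsNilpotent B ∧ M = E + B := by
  constructor
  · -- forward direction
    intro hR σ M hMmem
    obtain ⟨lam, hM⟩ := hMmem
    rw [mem_triC_iff] at hM
    obtain ⟨hMut, hMc⟩ := hM
    have hdec : ∀ i : Fin n, ∃ f b : R, f ∈ A.C 1 ∧ IsIdempotentElem f ∧
        b ∈ A.C (σ i * lam * (σ i)⁻¹) ∧ IsNilpotent b ∧ M i i = f + b :=
      fun i => A.refine_decomp (hMc i i) (hR _ ⟨_, hMc i i⟩)
    choose f b hf hfi hb hbn heq using hdec
    refine ⟨Matrix.diagonal f, M - Matrix.diagonal f, ⟨1, ?_⟩, ?_, ⟨lam, ?_⟩, ?_, by abel⟩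
    · rw [mem_triC_iff]
      constructor
      · intro i j hij
        exact Matrix.diagonal_apply_ne f (ne_of_gt hij)
      · intro i j
        by_cases hij : i = j
        · subst hij
          rw [Matrix.diagonal_apply_eq]
          have h1 : σ i * 1 * (σ i)⁻¹ = 1 := by group
          rw [h1]; exact hf i
        · rw [Matrix.diagonal_apply_ne f hij]; exact zero_mem _
    · show Matrix.diagonal f * Matrix.diagonal f = Matrix.diagonal f
      rw [Matrix.diagonal_mul_diagonal]
      exact congrArg Matrix.diagonal (funext fun i => (hfi i).eq)
    · rw [mem_triC_iff]
      constructor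
      · intro i j hij
        rw [Matrix.sub_apply, hMut i j hij,
          Matrix.diagonal_apply_ne f (ne_of_gt hij), sub_zero]
      · intro i j
        by_cases hij : i = j
        · subst hij
          rw [Matrix.sub_apply, Matrix.diagonal_apply_eq, heq i, add_sub_cancel_left]
          exact hb i
        · rw [Matrix.sub_apply, Matrix.diagonal_apply_ne f hij, sub_zero]
          exact hMc i j
    · apply ut_nilpotent
      · intro i j hij
        rw [Matrix.sub_apply, hMut i j hij,
          Matrix.diagonal_apply_ne f (ne_of_gt hij), sub_zero]
      · intro i
        rw [Matrix.sub_apply, Matrix.diagonal_apply_eq, heq i, add_sub_cancel_left]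
        exact hbn i
  · -- backward direction
    intro H a hahom
    obtain ⟨g, ha⟩ := hahom
    have hMmem : (Matrix.diagonal (fun _ => a) : Matrix (Fin n) (Fin n) R) ∈
        triC A (fun _ => (1 : G)) g := by
      rw [mem_triC_iff]
      constructor
      · intro i j hij
        exact Matrix.diagonal_apply_ne _ (ne_of_gt hij)
      · intro i j
        by_cases hij : i = j
        · subst hij
          rw [Matrix.diagonal_apply_eq]
          have h1 : (1 : G) * g * (1 : G)⁻¹ = g := by group
          rw [h1]; exact ha
        · rw [Matrix.diagonal_apply_ne _ hij]; exact zero_mem _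
    obtain ⟨E, B, ⟨mu, hE⟩, hEi, ⟨nu, hB⟩, hBn, heq⟩ :=
      H (fun _ => (1 : G)) (Matrix.diagonal (fun _ => a)) ⟨g, hMmem⟩
    rw [mem_triC_iff] at hE hB
    obtain ⟨hEut, hEc⟩ := hE
    obtain ⟨hBut, hBc⟩ := hB
    set i0 : Fin n := ⟨0, hn⟩ with hi0
    refine ⟨E i0 i0, B i0 i0, ⟨_, hEc i0 i0⟩, ?_, ⟨_, hBc i0 i0⟩, ?_, ?_⟩
    · -- idempotent
      have h2 : (E * E) i0 i0 = E i0 i0 * E i0 i0 := by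
        rw [Matrix.mul_apply]
        apply Finset.sum_eq_single i0
        · intro k _ hk
          have hlt : i0 < k := by
            rw [Fin.lt_def]
            have : (k : ℕ) ≠ 0 := fun h => hk (Fin.ext (by simp [hi0, h]))
            simp [hi0]
            omega
          rw [hEut k i0 hlt, mul_zero]
        · intro h; exact absurd (Finset.mem_univ _) h
      show E i0 i0 * E i0 i0 = E i0 i0
      rw [← h2, hEi.eq]
    · -- nilpotent
      obtain ⟨m, hm⟩ := hBn
      exact ⟨m, by rw [← ut_diag_pow hBut i0 m, hm, Matrix.zero_apply]⟩
    · -- sum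
      have h3 := congrFun (congrFun heq i0) i0
      simpa [Matrix.diagonal_apply_eq, Matrix.add_apply] using h3
end
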